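/- Let n and T be positive integers, let X ⊆ {0,1}^n be a nonempty finite set, let Y = conv(X) ⊆ [0,1]^n be its convex hull, let ‖·‖ be a norm on ℝ^n, and let P_T ≥ 0, α ∈ (0,1]. For each t ∈ {1,…,T} let f_t : {0,1}^n → ℝ be nonnegative, let f̃_t : Y → ℝ be continuous with f̃_t(x) ≥ f_t(x) for every x ∈ X, let (Ω, μ) be a probability space, y_t ∈ Y, and let x_t : Ω → X be measurable with ∫_Ω f_t(x_t(ω)) dμ(ω) ≥ α · f̃_t(y_t). Then α · sup { Σ_{t=1}^T f_t(x*_t) : (x*_1,…,x*_T) ∈ X^T, Σ_{t=1}^{T−1} ‖x*_{t+1} − x*_t‖ ≤ P_T } − ∫_Ω Σ_{t=1}^T f_t(x_t(ω)) dμ(ω) ≤ α · ( sup { Σ_{t=1}^T f̃_t(y*_t) : (y*_1,…,y*_T) ∈ Y^T, Σ_{t=1}^{T−1} ‖y*_{t+1} − y*_t‖ ≤ P_T } − Σ_{t=1}^T f̃_t(y_t) ). -/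

import Mathlib

open MeasureTheory

/-- Dynamic-regret version of the paper's reduction: the dynamic α-regret on `X` against
comparator sequences of path length at most `P` is bounded by `α` times the dynamic
regret of the fractional policy on `Y = conv X`. -/
theorem osm_to_oco_dynamic
    (n T : ℕ) (hn : 0 < n) (hT : 0 < T)
    (X : Finset (Fin n → ℝ)) (hXne : X.Nonempty)
    (hX01 : ∀ x ∈ X, ∀ i, x i = 0 ∨ x i = 1)
    (N : Seminorm ℝ (Fin n → ℝ)) (hN : ∀ v, N v = 0 → v = 0)
    (P : ℝ) (hP : 0 ≤ P)
    (α : ℝ) (hα0 : 0 < α) (hα1 : α ≤ 1)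
    (f : ℕ → (Fin n → ℝ) → ℝ)
    (hfnonneg : ∀ t, ∀ x : Fin n → ℝ, (∀ i, x i = 0 ∨ x i = 1) → 0 ≤ f t x)
    (ftil : ℕ → (Fin n → ℝ) → ℝ)
    (hftilcont : ∀ t, ContinuousOn (ftil t) (convexHull ℝ (X : Set (Fin n → ℝ))))
    (hsandwich : ∀ t, ∀ x ∈ X, f t x ≤ ftil t x)
    (Ω : Type*) [MeasurableSpace Ω] (μ : Measure Ω) [IsProbabilityMeasure μ]
    (y : ℕ → (Fin n → ℝ)) (hy : ∀ t, y t ∈ convexHull ℝ (X : Set (Fin n → ℝ)))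
    (xt : ℕ → Ω → (Fin n → ℝ)) (hxtmeas : ∀ t, Measurable (xt t))
    (hxtX : ∀ t ω, xt t ω ∈ X)
    (hround : ∀ t, α * ftil t (y t) ≤ ∫ ω, f t (xt t ω) ∂μ) :
    α * sSup {s : ℝ | ∃ xs : ℕ → (Fin n → ℝ), (∀ t, xs t ∈ X) ∧
          (∑ t ∈ Finset.range (T - 1), N (xs (t + 1) - xs t)) ≤ P ∧
          s = ∑ t ∈ Finset.range T, f t (xs t)}
        - ∫ ω, ∑ t ∈ Finset.range T, f t (xt t ω) ∂μ
      ≤ α * (sSup {s : ℝ | ∃ ys : ℕ → (Fin n → ℝ),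
              (∀ t, ys t ∈ convexHull ℝ (X : Set (Fin n → ℝ))) ∧
              (∑ t ∈ Finset.range (T - 1), N (ys (t + 1) - ys t)) ≤ P ∧
              s = ∑ t ∈ Finset.range T, ftil t (ys t)}
            - ∑ t ∈ Finset.range T, ftil t (y t)) := by
  classical
  obtain ⟨x0, hx0⟩ := hXne
  -- measurability of f t ∘ xt t
  have hmeas : ∀ t, Measurable (fun ω => f t (xt t ω)) := by
    intro t
    have heq : (fun ω => f t (xt t ω)) =
        fun ω => ∑ x ∈ X, Set.indicator ((xt t) ⁻¹' {x}) (fun _ => f t x) ω := by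
      funext ω
      rw [Finset.sum_eq_single (xt t ω)]
      · simp [Set.indicator]
      · intro b _ hb
        simp only [Set.indicator, Set.mem_preimage, Set.mem_singleton_iff]
        exact if_neg (fun h => hb h.symm)
      · intro h; exact absurd (hxtX t ω) h
    rw [heq]
    exact Finset.measurable_sum _ fun x _ =>
      (measurable_const.indicator ((hxtmeas t) (measurableSet_singleton x)))
  have hint : ∀ t, Integrable (fun ω => f t (xt t ω)) μ := by
    intro t
    refine ⟨(hmeas t).aestronglyMeasurable, ?_⟩
    apply HasFiniteIntegral.of_bounded (C := ∑ x ∈ X, f t x)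
    filter_upwards with ω
    have h0 := hfnonneg t (xt t ω) (hX01 _ (hxtX t ω))
    rw [Real.norm_eq_abs, abs_of_nonneg h0]
    exact Finset.single_le_sum (fun x hx => hfnonneg t x (hX01 x hx)) (hxtX t ω)
  have hintsum : ∫ ω, ∑ t ∈ Finset.range T, f t (xt t ω) ∂μ
      = ∑ t ∈ Finset.range T, ∫ ω, f t (xt t ω) ∂μ :=
    integral_finset_sum _ (fun t _ => hint t)
  have hI : α * ∑ t ∈ Finset.range T, ftil t (y t)
      ≤ ∫ ω, ∑ t ∈ Finset.range T, f t (xt t ω) ∂μ := by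
    rw [hintsum, Finset.mul_sum]
    exact Finset.sum_le_sum fun t _ => hround t
  -- boundedness of the fractional comparator set
  have hYcompact : IsCompact (convexHull ℝ (X : Set (Fin n → ℝ))) :=
    X.finite_toSet.isCompact_convexHull (𝕜 := ℝ)
  have hCbound : ∀ t, ∃ C : ℝ, ∀ z ∈ convexHull ℝ (X : Set (Fin n → ℝ)), ‖ftil t z‖ ≤ C :=
    fun t => hYcompact.exists_bound_of_continuousOn (hftilcont t)
  choose C hC using hCbound
  have hbdd : BddAbove {s : ℝ | ∃ ys : ℕ → (Fin n → ℝ),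
      (∀ t, ys t ∈ convexHull ℝ (X : Set (Fin n → ℝ))) ∧
      (∑ t ∈ Finset.range (T - 1), N (ys (t + 1) - ys t)) ≤ P ∧
      s = ∑ t ∈ Finset.range T, ftil t (ys t)} := by
    refine ⟨∑ t ∈ Finset.range T, C t, ?_⟩
    rintro s ⟨ys, hys, -, rfl⟩
    exact Finset.sum_le_sum fun t _ =>
      (le_abs_self _).trans (hC t (ys t) (hys t))
  have hXsub : sSup {s : ℝ | ∃ xs : ℕ → (Fin n → ℝ), (∀ t, xs t ∈ X) ∧
        (∑ t ∈ Finset.range (T - 1), N (xs (t + 1) - xs t)) ≤ P ∧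
        s = ∑ t ∈ Finset.range T, f t (xs t)}
      ≤ sSup {s : ℝ | ∃ ys : ℕ → (Fin n → ℝ),
        (∀ t, ys t ∈ convexHull ℝ (X : Set (Fin n → ℝ))) ∧
        (∑ t ∈ Finset.range (T - 1), N (ys (t + 1) - ys t)) ≤ P ∧
        s = ∑ t ∈ Finset.range T, ftil t (ys t)} := by
    apply csSup_le
    · refine ⟨∑ t ∈ Finset.range T, f t x0, fun _ => x0, fun _ => hx0, ?_, rfl⟩
      simp [map_zero]
      exact hP
    · rintro s ⟨xs, hxs, hpath, rfl⟩
      refine le_csSup_of_le hbdd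
        ⟨xs, fun t => subset_convexHull ℝ _ (hxs t), hpath, rfl⟩ ?_
      exact Finset.sum_le_sum fun t _ => hsandwich t _ (hxs t)
  have := mul_le_mul_of_nonneg_left hXsub hα0.le
  rw [mul_sub]
  linarith
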